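/- Let N ≥ 1 and let X : ℝ → Matrix (Fin N) (Fin N) ℝ be differentiable and B : ℝ → Matrix (Fin N) (Fin N) ℝ be continuous, and suppose X satisfies the Lax-pair equation X'(t) = X(t)·B(t) − B(t)·X(t) for all t ∈ ℝ. Then the flow is isospectral: the characteristic polynomial of X(t) is the same for all t ∈ ℝ (equivalently, spec(X(t)) = spec(X(0)) for all t). -/

import Mathlib

open Matrix Polynomial

lemma comm_adjugate {n : Type*} [Fintype n] [DecidableEq n] {R : Type*} [CommRing R] [IsDomain R]
    (M Y : Matrix n n R) (hd : M.det ≠ 0) (h : Y * M = M * Y) :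
    Y * adjugate M = adjugate M * Y := by
  have key : M.det • (Y * adjugate M) = M.det • (adjugate M * Y) := by
    calc M.det • (Y * adjugate M) = (adjugate M * M) * Y * adjugate M := by
          rw [adjugate_mul, smul_mul, one_mul, Matrix.smul_mul]
      _ = adjugate M * (Y * M) * adjugate M := by rw [h]; noncomm_ring
      _ = adjugate M * Y * (M * adjugate M) := by noncomm_ring
      _ = M.det • (adjugate M * Y) := by rw [mul_adjugate, Matrix.mul_smul, mul_one]
  ext i j
  have := congrArg (fun A => A i j) key
  simp only [Matrix.smul_apply, smul_eq_mul] at this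
  exact mul_left_cancel₀ hd this

lemma charmatrix_map_eval {n : Type*} [Fintype n] [DecidableEq n]
    (A : Matrix n n ℝ) (c : ℝ) :
    (charmatrix A).map (Polynomial.evalRingHom c) = c • (1 : Matrix n n ℝ) - A := by
  ext i j
  by_cases hij : i = j
  · subst hij
    simp [charmatrix_apply_eq, Matrix.one_apply]
  · simp [charmatrix_apply_ne _ _ _ hij, Matrix.one_apply, hij]

lemma adjugate_comm_self {n : Type*} [Fintype n] [DecidableEq n]
    (A : Matrix n n ℝ) (c : ℝ) :
    A * adjugate (c • (1 : Matrix n n ℝ) - A) = adjugate (c • (1 : Matrix n n ℝ) - A) * A := by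
  have hcomm : (A.map (Polynomial.C : ℝ →+* ℝ[X])) * charmatrix A
      = charmatrix A * (A.map (Polynomial.C : ℝ →+* ℝ[X])) := by
    unfold charmatrix
    rw [Matrix.mul_sub, Matrix.sub_mul]
    congr 1
    exact (Matrix.scalar_commute Polynomial.X (fun r => (Commute.all _ _)) _).symm
  have hd : (charmatrix A).det ≠ 0 := by
    rw [← Matrix.charpoly]
    exact (Matrix.charpoly_monic A).ne_zero
  have h := comm_adjugate (charmatrix A) (A.map (Polynomial.C : ℝ →+* ℝ[X])) hd hcomm
  have h2 := congrArg (fun M => M.map (Polynomial.evalRingHom c)) h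
  simp only [← RingHom.mapMatrix_apply, _root_.map_mul, RingHom.map_adjugate] at h2
  simp only [RingHom.mapMatrix_apply, charmatrix_map_eval] at h2
  have h3 : (A.map (Polynomial.C : ℝ →+* ℝ[X])).map (Polynomial.evalRingHom c) = A := by
    ext i j; simp
  rwa [h3] at h2

lemma eval_charpoly'' {n : Type*} [Fintype n] [DecidableEq n]
    (A : Matrix n n ℝ) (c : ℝ) :
    (A.charpoly).eval c = (c • (1 : Matrix n n ℝ) - A).det := by
  rw [Matrix.charpoly, show (Polynomial.eval c (charmatrix A).det)
    = (Polynomial.evalRingHom c) (charmatrix A).det from rfl, RingHom.map_det,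
    RingHom.mapMatrix_apply, charmatrix_map_eval]

lemma det_hasDerivAt {n : Type*} [Fintype n] [DecidableEq n]
    (M : ℝ → Matrix n n ℝ) (M' : Matrix n n ℝ) (t : ℝ)
    (h : ∀ i j, HasDerivAt (fun s => M s i j) (M' i j) t) :
    HasDerivAt (fun s => (M s).det) ((adjugate (M t) * M').trace) t := by
  have key : ∀ s : ℝ, (M s).det
      = ∑ σ : Equiv.Perm n, ((Equiv.Perm.sign σ : ℤ) : ℝ) * ∏ i, M s (σ i) i := by
    intro s
    rw [Matrix.det_apply]
    refine Finset.sum_congr rfl fun σ _ => ?_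
    rw [Units.smul_def, zsmul_eq_mul]
  have hder : HasDerivAt (fun s => ∑ σ : Equiv.Perm n,
      ((Equiv.Perm.sign σ : ℤ) : ℝ) * ∏ i, M s (σ i) i)
      (∑ σ : Equiv.Perm n, ((Equiv.Perm.sign σ : ℤ) : ℝ) *
        ∑ i, (∏ j ∈ Finset.univ.erase i, M t (σ j) j) * M' (σ i) i) t := by
    refine HasDerivAt.fun_sum fun σ _ => ?_
    have hp := HasDerivAt.fun_finsetProd (u := (Finset.univ : Finset n))
      (f := fun i s => M s (σ i) i) (f' := fun i => M' (σ i) i) (x := t)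
      (fun i _ => h (σ i) i)
    simpa [smul_eq_mul] using hp.const_mul (((Equiv.Perm.sign σ : ℤ) : ℝ))
  have e : (fun s => (M s).det) = (fun s => ∑ σ : Equiv.Perm n,
      ((Equiv.Perm.sign σ : ℤ) : ℝ) * ∏ i, M s (σ i) i) := funext key
  rw [e]
  convert hder using 1
  -- identify the trace with the big sum
  have h1 : ∀ i, (adjugate (M t) * M') i i
      = (Matrix.updateCol (M t) i (fun k => M' k i)).det := by
    intro i
    rw [← Matrix.cramer_apply, Matrix.cramer_eq_adjugate_mulVec]
    simp [Matrix.mul_apply, Matrix.mulVec, dotProduct]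
  have h2 : ∀ i, (Matrix.updateCol (M t) i (fun k => M' k i)).det
      = ∑ σ : Equiv.Perm n, ((Equiv.Perm.sign σ : ℤ) : ℝ) *
          (M' (σ i) i * ∏ j ∈ Finset.univ.erase i, M t (σ j) j) := by
    intro i
    rw [Matrix.det_apply]
    refine Finset.sum_congr rfl fun σ _ => ?_
    rw [Units.smul_def, zsmul_eq_mul]
    congr 1
    rw [← Finset.mul_prod_erase Finset.univ _ (Finset.mem_univ i)]
    congr 1
    · simp [Matrix.updateCol_apply]
    · refine Finset.prod_congr rfl fun j hj => ?_
      simp [Matrix.updateCol_apply, (Finset.mem_erase.mp hj).1]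
  rw [Matrix.trace]
  unfold Matrix.diag
  rw [Finset.sum_congr rfl (fun i _ => (h1 i).trans (h2 i)), Finset.sum_comm]
  refine Finset.sum_congr rfl fun σ _ => ?_
  rw [Finset.mul_sum]
  exact Finset.sum_congr rfl fun i _ => by ring

/-- **Isospectrality of Lax-pair flows.**
If `X : ℝ → Matrix (Fin N) (Fin N) ℝ` is differentiable (entrywise, with derivative
given by the commutator `X t * B t - B t * X t`) and `B` is continuous (entrywise),
then the characteristic polynomial of `X t` is independent of `t`; equivalently the
spectrum of `X t` equals that of `X 0` for all `t`. -/
theorem lax_pair_isospectral (N : ℕ) (hN : 1 ≤ N)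
    (X B : ℝ → Matrix (Fin N) (Fin N) ℝ)
    (hX : ∀ t (i j : Fin N),
      HasDerivAt (fun s => X s i j) ((X t * B t - B t * X t) i j) t)
    (hB : ∀ i j : Fin N, Continuous fun t => B t i j) :
    (∀ t : ℝ, (X t).charpoly = (X 0).charpoly) ∧
      (∀ t : ℝ, spectrum ℝ (X t) = spectrum ℝ (X 0)) := by
  have hcp : ∀ t : ℝ, (X t).charpoly = (X 0).charpoly := by
    intro t
    apply Polynomial.funext
    intro c
    rw [eval_charpoly'', eval_charpoly'']
    set f : ℝ → ℝ := fun s => (c • (1 : Matrix (Fin N) (Fin N) ℝ) - X s).det with hf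
    have hdf : ∀ s, HasDerivAt f 0 s := by
      intro s
      have hent : ∀ i j, HasDerivAt
          (fun u => (c • (1 : Matrix (Fin N) (Fin N) ℝ) - X u) i j)
          ((B s * X s - X s * B s) i j) s := by
        intro i j
        have h0 := (hX s i j).const_sub ((c • (1 : Matrix (Fin N) (Fin N) ℝ)) i j)
        have he : (fun u => (c • (1 : Matrix (Fin N) (Fin N) ℝ) - X u) i j)
            = fun u => (c • (1 : Matrix (Fin N) (Fin N) ℝ)) i j - X u i j := by
          funext u; simp [Matrix.sub_apply]
        rw [he]
        refine h0.congr_deriv ?_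
        simp only [Matrix.sub_apply]
        ring
      have hd := det_hasDerivAt (fun u => c • (1 : Matrix (Fin N) (Fin N) ℝ) - X u)
        (B s * X s - X s * B s) s hent
      have htr : (adjugate (c • (1 : Matrix (Fin N) (Fin N) ℝ) - X s) *
          (B s * X s - X s * B s)).trace = 0 := by
        set A := X s with hA
        set K := adjugate (c • (1 : Matrix (Fin N) (Fin N) ℝ) - A) with hKdef
        have hK : A * K = K * A := adjugate_comm_self A c
        rw [Matrix.mul_sub, Matrix.trace_sub,
          show K * (B s * A) = (K * B s) * A by noncomm_ring,
          Matrix.trace_mul_comm (K * B s) A,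
          show A * (K * B s) = (A * K) * B s by noncomm_ring, hK,
          show K * A * B s = K * (A * B s) by noncomm_ring, sub_self]
      rw [htr] at hd
      exact hd
    have hdiff : Differentiable ℝ f := fun s => (hdf s).differentiableAt
    exact is_const_of_deriv_eq_zero hdiff (fun s => (hdf s).deriv) t 0
  refine ⟨hcp, fun t => ?_⟩
  ext x
  have key : ∀ A : Matrix (Fin N) (Fin N) ℝ,
      x ∈ spectrum ℝ A ↔ A.charpoly.eval x = 0 := by
    intro A
    have halg : (algebraMap ℝ (Matrix (Fin N) (Fin N) ℝ)) x - A
        = x • (1 : Matrix (Fin N) (Fin N) ℝ) - A := by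
      rw [Algebra.algebraMap_eq_smul_one]
    rw [spectrum.mem_iff, halg, Matrix.isUnit_iff_isUnit_det, isUnit_iff_ne_zero, not_not,
      eval_charpoly'']
  rw [key, key, hcp t]
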